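/- Two finite hypergraphs H₁ = (V₁,E₁) and H₂ = (V₂,E₂) without isolated vertices are isomorphic if and only if there is a bijection φ: E₁ → E₂ such that for every nonempty S ⊆ E₁, |⋂S| = |⋂ φ[S]|. -/

import Mathlib

open Finset

private lemma sum_superset_split {α : Type*} [Fintype α] [DecidableEq α]
    (f : Finset α → ℕ) (S : Finset α) :
    (Finset.univ.filter (fun T => S ⊆ T)).sum f
      = f S + (Finset.univ.filter (fun T => S ⊂ T)).sum f := by
  have h : Finset.univ.filter (fun T => S ⊆ T)
      = insert S (Finset.univ.filter (fun T => S ⊂ T)) := by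
    ext T
    simp only [mem_filter, mem_univ, true_and, mem_insert, Finset.ssubset_iff_subset_ne]
    by_cases hT : T = S
    · subst hT; simp
    · simp [hT, Ne.symm hT]
  rw [h, Finset.sum_insert]
  simp only [mem_filter, mem_univ, true_and]
  exact fun h' => (Finset.ssubset_iff_subset_ne.mp h').2 rfl

private lemma profile_inversion {α β : Type*} [Fintype α] [Fintype β]
    [DecidableEq α] [DecidableEq β] (φ : α ≃ β)
    (f₁ : Finset α → ℕ) (f₂ : Finset β → ℕ)
    (h : ∀ S : Finset α, S.Nonempty →
      (Finset.univ.filter (fun T => S ⊆ T)).sum f₁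
        = (Finset.univ.filter (fun T => S.image φ ⊆ T)).sum f₂) :
    ∀ S : Finset α, S.Nonempty → f₁ S = f₂ (S.image φ) := by
  have himg : Function.Injective (Finset.image φ : Finset α → Finset β) :=
    Finset.image_injective φ.injective
  suffices H : ∀ k (S : Finset α), S.Nonempty → Fintype.card α - S.card ≤ k →
      f₁ S = f₂ (S.image φ) by
    intro S hS; exact H _ S hS le_rfl
  intro k
  induction k with
  | zero =>
    intro S hS hk
    have hcard : S.card = Fintype.card α := by
      have := S.card_le_univ; omega
    have hSu : S = Finset.univ := Finset.eq_univ_of_card S hcard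
    subst hSu
    have h1 : (Finset.univ.filter (fun T => (Finset.univ : Finset α) ⊆ T)) = {Finset.univ} := by
      ext T; simp [Finset.univ_subset_iff, eq_comm]
    have h2 : (Finset.univ.filter (fun T => (Finset.univ : Finset α).image φ ⊆ T))
        = {Finset.univ} := by
      ext T
      simp [Finset.image_univ_equiv, Finset.univ_subset_iff, eq_comm]
    have := h Finset.univ hS
    rw [h1, h2] at this
    simpa [Finset.image_univ_equiv] using this
  | succ k ih =>
    intro S hS hk
    have key : (Finset.univ.filter (fun T => S ⊂ T)).sum f₁
        = (Finset.univ.filter (fun T => S.image φ ⊂ T)).sum f₂ := by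
      apply Finset.sum_nbij' (i := fun T => T.image φ) (j := fun T => T.image φ.symm)
      · intro T hT
        simp only [mem_filter, mem_univ, true_and, Finset.ssubset_iff_subset_ne] at hT ⊢
        exact ⟨Finset.image_subset_image hT.1, fun he => hT.2 (himg he)⟩
      · intro T hT
        simp only [mem_filter, mem_univ, true_and, Finset.ssubset_iff_subset_ne] at hT ⊢
        have h1 : S ⊆ T.image φ.symm := by
          intro a ha
          have : φ a ∈ T := hT.1 (Finset.mem_image_of_mem φ ha)
          simpa using Finset.mem_image_of_mem φ.symm this
        refine ⟨h1, fun he => hT.2 ?_⟩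
        rw [he]
        simp [Finset.image_image]
      · intro T _; simp [Finset.image_image]
      · intro T _; simp [Finset.image_image]
      · intro T hT
        simp only [mem_filter, mem_univ, true_and, Finset.ssubset_iff_subset_ne] at hT
        have hTne : T.Nonempty := hS.mono hT.1
        have hcard : Fintype.card α - T.card ≤ k := by
          have h1 : S.card < T.card :=
            Finset.card_lt_card (Finset.ssubset_iff_subset_ne.mpr hT)
          have h2 : T.card ≤ Fintype.card α := by
            have := T.card_le_univ; simpa using this
          omega
        exact ih T hTne hcard
    have h1 := sum_superset_split f₁ S
    have h2 := sum_superset_split f₂ (S.image φ)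
    have h3 := h S hS
    omega

private lemma count_inf' {V ι : Type*} [Fintype V] [DecidableEq V] [Fintype ι] [DecidableEq ι]
    (c : ι → Finset V) (S : Finset ι) (hS : S.Nonempty) :
    (S.inf' hS c).card
      = (Finset.univ.filter (fun T => S ⊆ T)).sum
          (fun T => (Finset.univ.filter
            (fun v => Finset.univ.filter (fun e => v ∈ c e) = T)).card) := by
  have h1 : S.inf' hS c
      = Finset.univ.filter (fun v => S ⊆ Finset.univ.filter (fun e => v ∈ c e)) := by
    ext v
    simp only [Finset.mem_inf' hS, mem_filter, mem_univ, true_and, Finset.subset_iff]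
  rw [h1]
  rw [Finset.card_eq_sum_card_fiberwise
    (f := fun v => Finset.univ.filter (fun e => v ∈ c e))
    (t := Finset.univ.filter (fun T => S ⊆ T))
    (by intro v hv; simp only [mem_coe, mem_filter, mem_univ, true_and] at hv ⊢; exact hv)]
  apply Finset.sum_congr rfl
  intro T hT
  simp only [mem_filter, mem_univ, true_and] at hT
  congr 1
  ext v
  simp only [mem_filter, mem_univ, true_and]
  constructor
  · exact fun h => h.2
  · intro h; exact ⟨by rw [h]; exact hT, h⟩

private lemma inf'_image_eq {V₁ V₂ : Type*} [DecidableEq V₁] [DecidableEq V₂]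
    {E₁ : Finset (Finset V₁)} {E₂ : Finset (Finset V₂)}
    (g : V₁ ≃ V₂) (φ : {e // e ∈ E₁} → {e // e ∈ E₂})
    (hφ : ∀ e, (φ e : Finset V₂) = (e : Finset V₁).image g)
    (S : Finset {e // e ∈ E₁}) (hS : S.Nonempty) (hS' : (S.image φ).Nonempty) :
    ((S.image φ).inf' hS' (fun e => (e : Finset V₂)))
      = (S.inf' hS (fun e => (e : Finset V₁))).image g := by
  ext w
  simp only [Finset.mem_inf', Finset.mem_image]
  constructor
  · intro hw
    refine ⟨g.symm w, ?_, by simp⟩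
    intro e he
    have := hw (φ e) ⟨e, he, rfl⟩
    rw [hφ e] at this
    simp only [Finset.mem_image] at this
    obtain ⟨a, ha, hga⟩ := this
    have : a = g.symm w := by apply g.injective; simp [hga]
    rwa [this] at ha
  · rintro ⟨v, hv, rfl⟩
    rintro b ⟨e, he, rfl⟩
    rw [hφ e]
    exact Finset.mem_image_of_mem g (hv e he)

/-- Two finite hypergraphs without isolated vertices are isomorphic iff there is a
bijection `φ` between their edge sets preserving the cardinalities of all
intersections of nonempty families of edges. -/
theorem hypergraph_iso_iff_profile {V₁ V₂ : Type*} [Fintype V₁] [Fintype V₂]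
    [DecidableEq V₁] [DecidableEq V₂]
    (E₁ : Finset (Finset V₁)) (E₂ : Finset (Finset V₂))
    (hcov₁ : ∀ v : V₁, ∃ e ∈ E₁, v ∈ e) (hcov₂ : ∀ v : V₂, ∃ e ∈ E₂, v ∈ e) :
    (∃ g : V₁ ≃ V₂, E₂ = E₁.image (Finset.image g)) ↔
      (∃ φ : {e // e ∈ E₁} ≃ {e // e ∈ E₂},
        ∀ S : Finset {e // e ∈ E₁}, ∀ hS : S.Nonempty,
          (S.inf' hS (fun e => (e : Finset V₁))).card =
            ((S.image φ).inf' (hS.image φ) (fun e => (e : Finset V₂))).card) := by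
  classical
  constructor
  · rintro ⟨g, hg⟩
    have himg : ∀ e ∈ E₁, e.image g ∈ E₂ := fun e he => by
      rw [hg]; exact Finset.mem_image_of_mem _ he
    have hpre : ∀ e ∈ E₂, e.image g.symm ∈ E₁ := by
      intro e he
      rw [hg] at he
      obtain ⟨a, ha, rfl⟩ := Finset.mem_image.mp he
      simpa [Finset.image_image] using ha
    refine ⟨{ toFun := fun e => ⟨(e : Finset V₁).image g, himg _ e.2⟩
              invFun := fun e => ⟨(e : Finset V₂).image g.symm, hpre _ e.2⟩
              left_inv := fun e => by ext : 1; simp [Finset.image_image]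
              right_inv := fun e => by ext : 1; simp [Finset.image_image] }, ?_⟩
    intro S hS
    rw [inf'_image_eq g _ (fun e => rfl) S hS, Finset.card_image_of_injective _ g.injective]
  · rintro ⟨φ, hφ⟩
    let Ed : V₁ → Finset {e // e ∈ E₁} :=
      fun v => Finset.univ.filter (fun e => v ∈ (e : Finset V₁))
    let Dd : V₂ → Finset {e // e ∈ E₂} :=
      fun w => Finset.univ.filter (fun e => w ∈ (e : Finset V₂))
    have hEd : ∀ v, (Ed v).Nonempty := by
      intro v; obtain ⟨e, he, hv⟩ := hcov₁ v
      exact ⟨⟨e, he⟩, by simp [Ed, hv]⟩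
    have hDd : ∀ w, (Dd w).Nonempty := by
      intro w; obtain ⟨e, he, hw⟩ := hcov₂ w
      exact ⟨⟨e, he⟩, by simp [Dd, hw]⟩
    let f₁ : Finset {e // e ∈ E₁} → ℕ := fun T => (Finset.univ.filter (fun v => Ed v = T)).card
    let f₂ : Finset {e // e ∈ E₂} → ℕ := fun T => (Finset.univ.filter (fun w => Dd w = T)).card
    have hf : ∀ S : Finset {e // e ∈ E₁}, S.Nonempty → f₁ S = f₂ (S.image φ) := by
      apply profile_inversion φ f₁ f₂
      intro S hS
      have c1 := count_inf' (fun e : {e // e ∈ E₁} => (e : Finset V₁)) S hS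
      have c2 := count_inf' (fun e : {e // e ∈ E₂} => (e : Finset V₂)) (S.image φ) (hS.image φ)
      have key := hφ S hS
      rw [c1, c2] at key
      exact key
    have hcard : ∀ T : Finset {e // e ∈ E₁},
        Fintype.card {v // Ed v = T} = Fintype.card {w // Dd w = T.image φ} := by
      intro T
      rcases T.eq_empty_or_nonempty with rfl | hT
      · haveI h1 : IsEmpty {v // Ed v = (∅ : Finset {e // e ∈ E₁})} :=
          ⟨fun x => (hEd x.1).ne_empty x.2⟩
        haveI h2 : IsEmpty {w // Dd w = (∅ : Finset {e // e ∈ E₁}).image φ} :=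
          ⟨fun x => (hDd x.1).ne_empty (by simpa using x.2)⟩
        rw [Fintype.card_eq_zero, Fintype.card_eq_zero]
      · have e1 : Fintype.card {v // Ed v = T} = f₁ T := Fintype.card_subtype _
        have e2 : Fintype.card {w // Dd w = T.image φ} = f₂ (T.image φ) := Fintype.card_subtype _
        rw [e1, e2]; exact hf T hT
    let F : ∀ T : Finset {e // e ∈ E₁}, {v // Ed v = T} ≃ {w // Dd w = T.image φ} :=
      fun T => Fintype.equivOfCardEq (hcard T)
    let ψ : Finset {e // e ∈ E₁} ≃ Finset {e // e ∈ E₂} :=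
      ⟨fun T => T.image φ, fun T => T.image φ.symm,
        fun T => by simp [Finset.image_image],
        fun T => by simp [Finset.image_image]⟩
    let g : V₁ ≃ V₂ :=
      (((Equiv.sigmaFiberEquiv Ed).symm.trans (Equiv.sigmaCongrRight F)).trans
        ((Equiv.sigmaCongrLeft (β := fun T' : Finset {e // e ∈ E₂} => {w // Dd w = T'}) ψ).trans
          (Equiv.sigmaFiberEquiv Dd)))
    have hg : ∀ v, Dd (g v) = (Ed v).image φ := by
      intro v
      have h0 : g v = ((F (Ed v)) ⟨v, rfl⟩ : {w // Dd w = (Ed v).image φ}).1 := rfl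
      rw [h0]
      exact ((F (Ed v)) ⟨v, rfl⟩).2
    have hmem : ∀ (v : V₁) (e : {e // e ∈ E₁}),
        v ∈ (e : Finset V₁) ↔ g v ∈ (φ e : Finset V₂) := by
      intro v e
      have h1 : (v ∈ (e : Finset V₁)) ↔ e ∈ Ed v := by simp [Ed]
      have h2 : (g v ∈ (φ e : Finset V₂)) ↔ φ e ∈ Dd (g v) := by simp [Dd]
      rw [h1, h2, hg v]
      constructor
      · exact fun h => Finset.mem_image_of_mem φ h
      · intro h
        obtain ⟨a, ha, hae⟩ := Finset.mem_image.mp h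
        rwa [← φ.injective hae]
    have hφg : ∀ e : {e // e ∈ E₁}, (φ e : Finset V₂) = (e : Finset V₁).image g := by
      intro e; ext w
      rw [Finset.mem_image]
      constructor
      · intro hw
        exact ⟨g.symm w, by rw [hmem (g.symm w) e]; simpa using hw, by simp⟩
      · rintro ⟨v, hv, rfl⟩
        exact (hmem v e).mp hv
    refine ⟨g, ?_⟩
    ext e'
    simp only [Finset.mem_image]
    constructor
    · intro he'
      exact ⟨(φ.symm ⟨e', he'⟩ : {e // e ∈ E₁}).1, (φ.symm ⟨e', he'⟩).2,
        by rw [← hφg (φ.symm ⟨e', he'⟩)]; simp⟩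
    · rintro ⟨e, he, rfl⟩
      rw [← hφg ⟨e, he⟩]
      exact (φ ⟨e, he⟩).2
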